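/- Let m ≥ 2 and t_m > 0. For a ∈ L²(ℝ^{m−1} × ℝ^{m−1}) define α(a) ∈ L²(ℝ^m × ℝ^m) by (α(a))(x,ξ) = a(x',ξ') γ_{t_m/2}(x_m)^{1/2} γ_{1/(8t_m)}(ξ_m)^{1/2}, and for K ∈ L²(ℝ^{m−1} × ℝ^{m−1}) define η(K) ∈ L²(ℝ^m × ℝ^m) by (η(K))(x,y) = K(x',y') γ_{t_m}(x_m)^{1/2} γ_{t_m}(y_m)^{1/2}. Then η(T_{m−1}(a)) = T_m(α(a)) in L²(ℝ^m × ℝ^m), i.e. the middle square of the inductive diagram commutes. -/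

import Mathlib

open MeasureTheory

noncomputable section

/-- The density `γ_t(x) = (2πt)^{-1/2} e^{-x²/(2t)}` of the centered Gaussian
measure on `ℝ` with variance `t`. -/
def gauss (t x : ℝ) : ℝ :=
  (Real.sqrt (2 * Real.pi * t))⁻¹ * Real.exp (-(x ^ 2) / (2 * t))

/-- The Weyl symbol-to-kernel integral
`(2π)^{−m/2} ∫ a((x+y)/2, ξ) e^{i⟨x−y,ξ⟩} dξ` at `z = (x,y)`, for `ℝ^m = ι → ℝ`. -/
def weylIntegral {ι : Type} [Fintype ι]
    (a : ((ι → ℝ) × (ι → ℝ)) → ℂ) (z : (ι → ℝ) × (ι → ℝ)) : ℂ :=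
  (((2 * Real.pi) ^ (-(Fintype.card ι : ℝ) / 2) : ℝ) : ℂ) *
    ∫ ξ : ι → ℝ,
      a (fun j => (z.1 j + z.2 j) / 2, ξ) *
        Complex.exp (Complex.I * ((∑ j, (z.1 j - z.2 j) * ξ j : ℝ) : ℂ))

/-- `U` is the Weyl symbol-to-kernel unitary `T_m` on `L²(ℝ^m × ℝ^m)` (with `ℝ^m = ι → ℝ`):
it is characterized by acting via the Weyl integral formula on `L² ∩ L¹` symbols. -/
def IsWeylTransform {ι : Type} [Fintype ι]
    (U : Lp ℂ 2 (volume : Measure ((ι → ℝ) × (ι → ℝ))) ≃ₗᵢ[ℂ]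
         Lp ℂ 2 (volume : Measure ((ι → ℝ) × (ι → ℝ)))) : Prop :=
  ∀ (a : ((ι → ℝ) × (ι → ℝ)) → ℂ) (ha : MemLp a 2 volume),
    Integrable a volume →
      ∀ᵐ z ∂(volume : Measure ((ι → ℝ) × (ι → ℝ))),
        (U (ha.toLp a)) z = weylIntegral a z

namespace WeylAux

open Real Complex

/-! ### Gaussian facts -/

lemma gauss_nonneg (s x : ℝ) : 0 ≤ gauss s x := by
  unfold gauss; positivity

lemma gauss_eq (s x : ℝ) :
    gauss s x = (Real.sqrt (2 * Real.pi * s))⁻¹ * Real.exp (-(1 / (2 * s)) * x ^ 2) := by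
  unfold gauss
  congr 1
  congr 1
  ring

lemma integrable_gauss {s : ℝ} (hs : 0 < s) : Integrable (gauss s) := by
  have : (gauss s) = fun x => (Real.sqrt (2 * Real.pi * s))⁻¹ *
      Real.exp (-(1 / (2 * s)) * x ^ 2) := funext fun x => gauss_eq s x
  rw [this]
  exact (integrable_exp_neg_mul_sq (by positivity)).const_mul _

lemma integral_gauss {s : ℝ} (hs : 0 < s) : ∫ x, gauss s x = 1 := by
  have h : (gauss s) = fun x => (Real.sqrt (2 * Real.pi * s))⁻¹ *
      Real.exp (-(1 / (2 * s)) * x ^ 2) := funext fun x => gauss_eq s x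
  rw [h, integral_const_mul, integral_gaussian]
  have h2 : Real.pi / (1 / (2 * s)) = 2 * Real.pi * s := by
    field_simp
  rw [h2]
  exact inv_mul_cancel₀ (Real.sqrt_ne_zero'.mpr (by positivity))

lemma sqrt_gauss {s : ℝ} (hs : 0 < s) (x : ℝ) :
    Real.sqrt (gauss s x) =
      Real.sqrt (Real.sqrt (2 * Real.pi * s))⁻¹ * Real.exp (-(x ^ 2) / (4 * s)) := by
  unfold gauss
  rw [Real.sqrt_mul (by positivity), ← Real.exp_half]
  congr 1
  ring

lemma integrable_sqrt_gauss {s : ℝ} (hs : 0 < s) :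
    Integrable (fun x => Real.sqrt (gauss s x)) := by
  have h : (fun x => Real.sqrt (gauss s x)) = fun x =>
      Real.sqrt (Real.sqrt (2 * Real.pi * s))⁻¹ * Real.exp (-(1 / (4 * s)) * x ^ 2) := by
    funext x
    rw [sqrt_gauss hs]
    congr 1
    ring_nf
  rw [h]
  exact (integrable_exp_neg_mul_sq (by positivity)).const_mul _

/-- The complexified square root of the Gaussian density. -/
def sg (s x : ℝ) : ℂ := (Real.sqrt (gauss s x) : ℂ)

lemma continuous_sg (s : ℝ) : Continuous (sg s) := by
  unfold sg gauss
  fun_prop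

lemma lintegral_sq_sg {s : ℝ} (hs : 0 < s) :
    ∫⁻ x : ℝ, (‖sg s x‖₊ : ENNReal) ^ (2 : ℝ) = 1 := by
  have h : ∀ x : ℝ, (‖sg s x‖₊ : ENNReal) ^ (2 : ℝ) = ENNReal.ofReal (gauss s x) := by
    intro x
    rw [← enorm_eq_nnnorm, ← ofReal_norm_eq_enorm]
    rw [show ‖sg s x‖ = Real.sqrt (gauss s x) by
      rw [sg, Complex.norm_real, Real.norm_eq_abs, _root_.abs_of_nonneg (Real.sqrt_nonneg _)]]
    rw [ENNReal.ofReal_rpow_of_nonneg (Real.sqrt_nonneg _) (by norm_num)]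
    congr 1
    rw [show ((2 : ℝ) : ℝ) = ((2 : ℕ) : ℝ) by norm_num, Real.rpow_natCast]
    exact Real.sq_sqrt (gauss_nonneg s x)
  simp_rw [h]
  rw [← ofReal_integral_eq_lintegral_ofReal (integrable_gauss hs)
    (Filter.Eventually.of_forall (gauss_nonneg s))]
  rw [integral_gauss hs, ENNReal.ofReal_one]

lemma lintegral_sg_lt_top {s : ℝ} (hs : 0 < s) :
    ∫⁻ x : ℝ, (‖sg s x‖₊ : ENNReal) < ⊤ := by
  have h : ∀ x : ℝ, (‖sg s x‖₊ : ENNReal) = ENNReal.ofReal (Real.sqrt (gauss s x)) := by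
    intro x
    rw [← enorm_eq_nnnorm, ← ofReal_norm_eq_enorm]
    congr 1
    rw [sg, Complex.norm_real, Real.norm_eq_abs, _root_.abs_of_nonneg (Real.sqrt_nonneg _)]
  simp_rw [h]
  rw [← ofReal_integral_eq_lintegral_ofReal (integrable_sqrt_gauss hs)
    (Filter.Eventually.of_forall fun x => Real.sqrt_nonneg _)]
  exact ENNReal.ofReal_lt_top

/-! ### The extension maps -/

variable {n : ℕ}

/-- Projection `ℝ^{m} × ℝ^{m} → ℝ^{m-1} × ℝ^{m-1}` dropping the last coordinates. -/
def proj (n : ℕ) (z : (Fin (n + 1) → ℝ) × (Fin (n + 1) → ℝ)) :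
    (Fin n → ℝ) × (Fin n → ℝ) :=
  (z.1 ∘ Fin.castSucc, z.2 ∘ Fin.castSucc)

/-- Tensoring a function on `ℝ^{m-1} × ℝ^{m-1}` with square-root Gaussians in the
last coordinates. -/
def extF (n : ℕ) (t₁ t₂ : ℝ) (f : (Fin n → ℝ) × (Fin n → ℝ) → ℂ) :
    (Fin (n + 1) → ℝ) × (Fin (n + 1) → ℝ) → ℂ :=
  fun z => f (proj n z) * sg t₁ (z.1 (Fin.last n)) * sg t₂ (z.2 (Fin.last n))

lemma extF_sub (t₁ t₂ : ℝ) (f g : (Fin n → ℝ) × (Fin n → ℝ) → ℂ) :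
    extF n t₁ t₂ f - extF n t₁ t₂ g = extF n t₁ t₂ (f - g) := by
  funext z
  simp only [Pi.sub_apply, extF]
  ring

/-! ### Measure-theoretic plumbing -/

/-- The measurable equivalence `ℝ^{n+1} ≃ ℝ × ℝ^n` splitting off the last coordinate. -/
def eM (n : ℕ) : (Fin (n + 1) → ℝ) ≃ᵐ ℝ × (Fin n → ℝ) :=
  MeasurableEquiv.piFinSuccAbove (fun _ => ℝ) (Fin.last n)

lemma he (n : ℕ) : MeasurePreserving (eM n) volume volume :=
  volume_preserving_piFinSuccAbove (fun _ => ℝ) (Fin.last n)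

lemma eM_symm_last (n : ℕ) (p : ℝ × (Fin n → ℝ)) :
    (eM n).symm p (Fin.last n) = p.1 := by
  simp [eM, MeasurableEquiv.piFinSuccAbove, Fin.insertNth_last']

lemma eM_symm_castSucc (n : ℕ) (p : ℝ × (Fin n → ℝ)) (j : Fin n) :
    (eM n).symm p (Fin.castSucc j) = p.2 j := by
  simp [eM, MeasurableEquiv.piFinSuccAbove, Fin.insertNth_last']

lemma eM_snd (n : ℕ) (x : Fin (n + 1) → ℝ) : (eM n x).2 = x ∘ Fin.castSucc := by
  funext j
  simp only [eM, MeasurableEquiv.piFinSuccAbove, MeasurableEquiv.coe_mk, Equiv.symm_symm,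
    Fin.insertNthEquiv_symm_apply, Function.comp_apply]
  show Fin.removeNth (Fin.last n) x j = _
  rw [Fin.removeNth_apply, Fin.succAbove_last]

lemma qmp_snd_assoc {α β γ : Type*} [MeasurableSpace α] [MeasurableSpace β] [MeasurableSpace γ]
    (μ : Measure α) (ν : Measure β) (ρ : Measure γ) [SFinite μ] [SFinite ν] [SFinite ρ] :
    Measure.QuasiMeasurePreserving (fun w : (α × β) × γ => (w.1.2, w.2))
      ((μ.prod ν).prod ρ) (ν.prod ρ) :=
  Measure.quasiMeasurePreserving_snd.comp
    (measurePreserving_prodAssoc μ ν ρ).quasiMeasurePreserving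

lemma qmp_id_snd {β γ δ : Type*} [MeasurableSpace β] [MeasurableSpace γ] [MeasurableSpace δ]
    (ν : Measure β) (ρ : Measure γ) (τ : Measure δ) [SFinite ν] [SFinite ρ] [SFinite τ] :
    Measure.QuasiMeasurePreserving (fun v : β × γ × δ => (v.1, v.2.2))
      (ν.prod (ρ.prod τ)) (ν.prod τ) :=
  Measure.measurePreserving_swap.quasiMeasurePreserving.comp
    ((qmp_snd_assoc ρ τ ν).comp Measure.measurePreserving_swap.quasiMeasurePreserving)

lemma qmp_proj (n : ℕ) :
    Measure.QuasiMeasurePreserving (proj n)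
      (volume : Measure ((Fin (n + 1) → ℝ) × (Fin (n + 1) → ℝ)))
      (volume : Measure ((Fin n → ℝ) × (Fin n → ℝ))) := by
  have heq : MeasurePreserving (Prod.map (⇑(eM n)) (⇑(eM n)))
      (volume : Measure ((Fin (n + 1) → ℝ) × (Fin (n + 1) → ℝ)))
      (((volume : Measure ℝ).prod (volume : Measure (Fin n → ℝ))).prod
        ((volume : Measure ℝ).prod (volume : Measure (Fin n → ℝ)))) :=
    (he n).prod (he n)
  have h1 : Measure.QuasiMeasurePreserving
      (fun w : (ℝ × (Fin n → ℝ)) × (ℝ × (Fin n → ℝ)) => (w.1.2, w.2.2))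
      (((volume : Measure ℝ).prod (volume : Measure (Fin n → ℝ))).prod
        ((volume : Measure ℝ).prod (volume : Measure (Fin n → ℝ))))
      ((volume : Measure (Fin n → ℝ)).prod (volume : Measure (Fin n → ℝ))) :=
    (qmp_id_snd _ _ _).comp (qmp_snd_assoc _ _ _)
  have hfun : proj n = (fun w : (ℝ × (Fin n → ℝ)) × (ℝ × (Fin n → ℝ)) => (w.1.2, w.2.2)) ∘
      (Prod.map (⇑(eM n)) (⇑(eM n))) := by
    funext z
    simp only [proj, Function.comp_apply, Prod.map]
    exact Prod.ext (eM_snd n z.1).symm (eM_snd n z.2).symm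
  rw [show (volume : Measure ((Fin n → ℝ) × (Fin n → ℝ))) =
    ((volume : Measure (Fin n → ℝ)).prod (volume : Measure (Fin n → ℝ))) from rfl, hfun]
  exact h1.comp heq.quasiMeasurePreserving

/-! ### Lintegral of extended functions -/

lemma lintegral_prod_prod {A B C D : Type*} [MeasurableSpace A] [MeasurableSpace B]
    [MeasurableSpace C] [MeasurableSpace D]
    (μa : Measure A) (μb : Measure B) (μc : Measure C) (μd : Measure D)
    [SFinite μa] [SFinite μb] [SFinite μc] [SFinite μd]
    (F : B × D → ENNReal) (hF : Measurable F)
    (G₁ : A → ENNReal) (hG₁ : Measurable G₁) (G₂ : C → ENNReal) (hG₂ : Measurable G₂) :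
    ∫⁻ w : (A × B) × (C × D), F (w.1.2, w.2.2) * G₁ w.1.1 * G₂ w.2.1
        ∂((μa.prod μb).prod (μc.prod μd))
      = (∫⁻ x, F x ∂(μb.prod μd)) * (∫⁻ x, G₁ x ∂μa) * (∫⁻ x, G₂ x ∂μc) := by
  have hmeas : Measurable fun w : (A × B) × (C × D) => F (w.1.2, w.2.2) * G₁ w.1.1 * G₂ w.2.1 :=
    ((hF.comp ((measurable_snd.comp measurable_fst).prodMk
      (measurable_snd.comp measurable_snd))).mul
        (hG₁.comp (measurable_fst.comp measurable_fst))).mul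
      (hG₂.comp (measurable_fst.comp measurable_snd))
  rw [lintegral_prod _ hmeas.aemeasurable]
  have hinner : ∀ w₁ : A × B,
      (∫⁻ w₂ : C × D, F (w₁.2, w₂.2) * G₁ w₁.1 * G₂ w₂.1 ∂(μc.prod μd))
        = G₁ w₁.1 * ((∫⁻ d, F (w₁.2, d) ∂μd) * ∫⁻ x, G₂ x ∂μc) := by
    intro w₁
    have h1 : ∀ w₂ : C × D, F (w₁.2, w₂.2) * G₁ w₁.1 * G₂ w₂.1
        = G₂ w₂.1 * ((fun d => F (w₁.2, d) * G₁ w₁.1) w₂.2) := by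
      intro w₂; ring
    simp_rw [h1]
    rw [lintegral_prod_mul (f := G₂) (g := fun d => F (w₁.2, d) * G₁ w₁.1) hG₂.aemeasurable
      (((hF.comp (measurable_prodMk_left)).mul_const _).aemeasurable)]
    rw [lintegral_mul_const (f := fun d => F (w₁.2, d)) _ (hF.comp (measurable_prodMk_left))]
    ring
  simp_rw [hinner]
  have hK : Measurable fun x : B => ∫⁻ d, F (x, d) ∂μd := hF.lintegral_prod_right'
  have h2 : ∀ w₁ : A × B, G₁ w₁.1 * ((∫⁻ d, F (w₁.2, d) ∂μd) * ∫⁻ x, G₂ x ∂μc)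
      = G₁ w₁.1 * ((fun x => (∫⁻ d, F (x, d) ∂μd) * ∫⁻ x, G₂ x ∂μc) w₁.2) := fun _ => rfl
  simp_rw [h2]
  rw [lintegral_prod_mul (f := G₁) (g := fun x => (∫⁻ d, F (x, d) ∂μd) * ∫⁻ x, G₂ x ∂μc)
    hG₁.aemeasurable ((hK.mul_const _).aemeasurable)]
  rw [lintegral_mul_const _ hK, ← lintegral_prod _ hF.aemeasurable]
  ring

lemma lintegral_ext (F : (Fin n → ℝ) × (Fin n → ℝ) → ENNReal)
    (hF : AEMeasurable F volume) (G₁ G₂ : ℝ → ENNReal)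
    (hG₁ : Measurable G₁) (hG₂ : Measurable G₂) :
    ∫⁻ z : (Fin (n + 1) → ℝ) × (Fin (n + 1) → ℝ),
        F (proj n z) * G₁ (z.1 (Fin.last n)) * G₂ (z.2 (Fin.last n))
      = (∫⁻ w, F w) * (∫⁻ u, G₁ u) * (∫⁻ u, G₂ u) := by
  obtain ⟨F', hF'm, hFF'⟩ := hF
  have hcomp : (fun z : (Fin (n + 1) → ℝ) × (Fin (n + 1) → ℝ) => F (proj n z))
      =ᵐ[volume] fun z => F' (proj n z) := (qmp_proj n).ae_eq hFF'
  have hcomp2 : (fun z : (Fin (n + 1) → ℝ) × (Fin (n + 1) → ℝ) =>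
      F (proj n z) * G₁ (z.1 (Fin.last n)) * G₂ (z.2 (Fin.last n)))
      =ᵐ[volume] (fun z => F' (proj n z) * G₁ (z.1 (Fin.last n)) * G₂ (z.2 (Fin.last n))) := by
    filter_upwards [hcomp] with z hz
    rw [show F (proj n z) = F' (proj n z) from hz]
  rw [lintegral_congr_ae hcomp2, lintegral_congr_ae hFF']
  -- now transfer through the measurable equivalence
  have hE : MeasurePreserving
      (Prod.map (⇑(eM n)) (⇑(eM n)))
      (volume : Measure ((Fin (n + 1) → ℝ) × (Fin (n + 1) → ℝ)))
      (((volume : Measure ℝ).prod (volume : Measure (Fin n → ℝ))).prod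
        ((volume : Measure ℝ).prod (volume : Measure (Fin n → ℝ)))) := (he n).prod (he n)
  have hEemb : MeasurableEmbedding (Prod.map (⇑(eM n)) (⇑(eM n))) :=
    ((eM n).measurableEmbedding).prodMap ((eM n).measurableEmbedding)
  have hpt : ∀ z : (Fin (n + 1) → ℝ) × (Fin (n + 1) → ℝ),
      F' (proj n z) * G₁ (z.1 (Fin.last n)) * G₂ (z.2 (Fin.last n))
        = F' ((Prod.map (⇑(eM n)) (⇑(eM n)) z).1.2, (Prod.map (⇑(eM n)) (⇑(eM n)) z).2.2)
          * G₁ ((Prod.map (⇑(eM n)) (⇑(eM n)) z).1.1)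
          * G₂ ((Prod.map (⇑(eM n)) (⇑(eM n)) z).2.1) := by
    intro z
    have h1 : (eM n z.1).2 = z.1 ∘ Fin.castSucc := eM_snd n z.1
    have h2 : (eM n z.2).2 = z.2 ∘ Fin.castSucc := eM_snd n z.2
    have h3 : (eM n z.1).1 = z.1 (Fin.last n) := rfl
    have h4 : (eM n z.2).1 = z.2 (Fin.last n) := rfl
    simp only [Prod.map, proj, h1, h2, h3, h4]
  calc ∫⁻ z, F' (proj n z) * G₁ (z.1 (Fin.last n)) * G₂ (z.2 (Fin.last n))
      = ∫⁻ z, F' ((Prod.map (⇑(eM n)) (⇑(eM n)) z).1.2, (Prod.map (⇑(eM n)) (⇑(eM n)) z).2.2)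
          * G₁ ((Prod.map (⇑(eM n)) (⇑(eM n)) z).1.1)
          * G₂ ((Prod.map (⇑(eM n)) (⇑(eM n)) z).2.1) := lintegral_congr hpt
    _ = ∫⁻ w : (ℝ × (Fin n → ℝ)) × (ℝ × (Fin n → ℝ)),
          F' (w.1.2, w.2.2) * G₁ w.1.1 * G₂ w.2.1
          ∂(((volume : Measure ℝ).prod (volume : Measure (Fin n → ℝ))).prod
            ((volume : Measure ℝ).prod (volume : Measure (Fin n → ℝ)))) :=
        hE.lintegral_comp_emb hEemb (fun w => F' (w.1.2, w.2.2) * G₁ w.1.1 * G₂ w.2.1)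
    _ = (∫⁻ w, F' w ∂((volume : Measure (Fin n → ℝ)).prod (volume : Measure (Fin n → ℝ))))
          * (∫⁻ u, G₁ u) * (∫⁻ u, G₂ u) :=
        lintegral_prod_prod volume volume volume volume F' hF'm G₁ hG₁ G₂ hG₂
    _ = (∫⁻ w, F' w) * (∫⁻ u, G₁ u) * (∫⁻ u, G₂ u) := rfl

lemma aestronglyMeasurable_extF {t₁ t₂ : ℝ} {f : (Fin n → ℝ) × (Fin n → ℝ) → ℂ}
    (hf : AEStronglyMeasurable f volume) :
    AEStronglyMeasurable (extF n t₁ t₂ f) volume := by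
  unfold extF
  exact ((hf.comp_quasiMeasurePreserving (qmp_proj n)).mul
    (((continuous_sg t₁).comp
      ((continuous_apply (Fin.last n)).comp continuous_fst)).aestronglyMeasurable)).mul
    (((continuous_sg t₂).comp
      ((continuous_apply (Fin.last n)).comp continuous_snd)).aestronglyMeasurable)

lemma eLpNorm_extF {t₁ t₂ : ℝ} (ht₁ : 0 < t₁) (ht₂ : 0 < t₂)
    {f : (Fin n → ℝ) × (Fin n → ℝ) → ℂ} (hf : AEStronglyMeasurable f volume) :
    eLpNorm (extF n t₁ t₂ f) 2 volume = eLpNorm f 2 volume := by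
  rw [eLpNorm_eq_lintegral_rpow_enorm_toReal (by norm_num) (by norm_num),
    eLpNorm_eq_lintegral_rpow_enorm_toReal (by norm_num) (by norm_num)]
  simp only [enorm_eq_nnnorm]
  congr 1
  have hpt : ∀ z, (‖extF n t₁ t₂ f z‖₊ : ENNReal) ^ ((2 : ENNReal).toReal)
      = (‖f (proj n z)‖₊ : ENNReal) ^ (2 : ℝ) * (‖sg t₁ (z.1 (Fin.last n))‖₊ : ENNReal) ^ (2 : ℝ)
        * (‖sg t₂ (z.2 (Fin.last n))‖₊ : ENNReal) ^ (2 : ℝ) := by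
    intro z
    rw [show ((2 : ENNReal).toReal) = (2 : ℝ) by norm_num]
    rw [extF, nnnorm_mul, nnnorm_mul, ENNReal.coe_mul, ENNReal.coe_mul,
      ENNReal.mul_rpow_of_nonneg _ _ (by norm_num),
      ENNReal.mul_rpow_of_nonneg _ _ (by norm_num)]
  simp_rw [hpt]
  rw [lintegral_ext (fun w => (‖f w‖₊ : ENNReal) ^ (2:ℝ)) (hf.enorm.pow aemeasurable_const) _ _
    (((continuous_sg t₁).measurable.nnnorm.coe_nnreal_ennreal).pow measurable_const)
    (((continuous_sg t₂).measurable.nnnorm.coe_nnreal_ennreal).pow measurable_const)]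
  rw [lintegral_sq_sg ht₁, lintegral_sq_sg ht₂, mul_one, mul_one]
  norm_num

lemma memℒp_extF {t₁ t₂ : ℝ} (ht₁ : 0 < t₁) (ht₂ : 0 < t₂)
    {f : (Fin n → ℝ) × (Fin n → ℝ) → ℂ} (hf : MemLp f 2 volume) :
    MemLp (extF n t₁ t₂ f) 2 volume := by
  refine ⟨aestronglyMeasurable_extF hf.1, ?_⟩
  rw [eLpNorm_extF ht₁ ht₂ hf.1]
  exact hf.2

lemma integrable_extF {t₁ t₂ : ℝ} (ht₁ : 0 < t₁) (ht₂ : 0 < t₂)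
    {f : (Fin n → ℝ) × (Fin n → ℝ) → ℂ} (hf : Integrable f volume) :
    Integrable (extF n t₁ t₂ f) volume := by
  refine ⟨aestronglyMeasurable_extF hf.1, ?_⟩
  rw [hasFiniteIntegral_def]
  simp only [enorm_eq_nnnorm]
  have hpt : ∀ z, (‖extF n t₁ t₂ f z‖₊ : ENNReal)
      = (‖f (proj n z)‖₊ : ENNReal) * (‖sg t₁ (z.1 (Fin.last n))‖₊ : ENNReal)
        * (‖sg t₂ (z.2 (Fin.last n))‖₊ : ENNReal) := by
    intro z
    rw [extF, nnnorm_mul, nnnorm_mul, ENNReal.coe_mul, ENNReal.coe_mul]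
  simp_rw [hpt]
  rw [lintegral_ext (fun w => (‖f w‖₊ : ENNReal)) hf.1.enorm _ _
    ((continuous_sg t₁).measurable.nnnorm.coe_nnreal_ennreal)
    ((continuous_sg t₂).measurable.nnnorm.coe_nnreal_ennreal)]
  exact ENNReal.mul_lt_top
    (ENNReal.mul_lt_top hf.2 (lintegral_sg_lt_top ht₁)) (lintegral_sg_lt_top ht₂)

/-! ### The one-dimensional computation -/

lemma key_real {t : ℝ} (ht : 0 < t) (x y : ℝ) :
    (2 * Real.pi) ^ (-(1 : ℝ) / 2) * Real.sqrt (gauss (t / 2) ((x + y) / 2)) *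
        (Real.sqrt (Real.sqrt (2 * Real.pi * (1 / (8 * t))))⁻¹ *
          ((Real.pi / (2 * t)) ^ ((1 : ℝ) / 2) * Real.exp (-(x - y) ^ 2 / (8 * t))))
      = Real.sqrt (gauss t x) * Real.sqrt (gauss t y) := by
  have hpi := Real.pi_pos
  rw [sqrt_gauss (by positivity : (0:ℝ) < t/2), sqrt_gauss ht, sqrt_gauss ht]
  have ha1 : 2 * Real.pi * (t / 2) = Real.pi * t := by ring
  have ha2 : 2 * Real.pi * (1 / (8 * t)) = Real.pi / (4 * t) := by
    field_simp
    ring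
  rw [ha1, ha2]
  have h1 : (2 * Real.pi) ^ (-(1 : ℝ) / 2) = (Real.sqrt (2 * Real.pi))⁻¹ := by
    rw [show -(1:ℝ)/2 = -(1/2) by ring, Real.rpow_neg (by positivity), Real.sqrt_eq_rpow]
  have h2 : (Real.pi / (2 * t)) ^ ((1 : ℝ) / 2) = Real.sqrt (Real.pi / (2 * t)) :=
    (Real.sqrt_eq_rpow _).symm
  rw [h1, h2]
  set e1 : ℝ := -(((x + y) / 2) ^ 2) / (4 * (t / 2)) with he1
  set e2 : ℝ := -(x - y) ^ 2 / (8 * t) with he2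
  set e3 : ℝ := -(x ^ 2) / (4 * t) with he3
  set e4 : ℝ := -(y ^ 2) / (4 * t) with he4
  set CL : ℝ := (Real.sqrt (2 * Real.pi))⁻¹ * Real.sqrt (Real.sqrt (Real.pi * t))⁻¹ *
    (Real.sqrt (Real.sqrt (Real.pi / (4 * t)))⁻¹ * Real.sqrt (Real.pi / (2 * t))) with hCL
  have hC : CL = (Real.sqrt (2 * Real.pi * t))⁻¹ := by
    have hCLnn : 0 ≤ CL := by rw [hCL]; positivity
    have hCRnn : 0 ≤ (Real.sqrt (2 * Real.pi * t))⁻¹ := by positivity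
    have hss : Real.sqrt (Real.pi * t) * Real.sqrt (Real.pi / (4 * t)) = Real.pi / 2 := by
      rw [← Real.sqrt_mul (by positivity),
        show Real.pi * t * (Real.pi / (4 * t)) = (Real.pi / 2) ^ 2 by field_simp; ring,
        Real.sqrt_sq (by positivity)]
    have hsq : CL ^ 2 = ((Real.sqrt (2 * Real.pi * t))⁻¹) ^ 2 := by
      have expand : CL ^ 2 = ((Real.sqrt (2 * Real.pi))⁻¹) ^ 2 *
          (Real.sqrt (Real.sqrt (Real.pi * t))⁻¹) ^ 2 *
          (Real.sqrt (Real.sqrt (Real.pi / (4 * t)))⁻¹) ^ 2 *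
          (Real.sqrt (Real.pi / (2 * t))) ^ 2 := by rw [hCL]; ring
      rw [expand, inv_pow, Real.sq_sqrt (by positivity : (0:ℝ) ≤ 2 * Real.pi),
        Real.sq_sqrt (by positivity : (0:ℝ) ≤ (Real.sqrt (Real.pi * t))⁻¹),
        Real.sq_sqrt (by positivity : (0:ℝ) ≤ (Real.sqrt (Real.pi / (4 * t)))⁻¹),
        Real.sq_sqrt (by positivity : (0:ℝ) ≤ Real.pi / (2 * t)),
        inv_pow, Real.sq_sqrt (by positivity : (0:ℝ) ≤ 2 * Real.pi * t)]
      have reassoc : (2 * Real.pi)⁻¹ * (Real.sqrt (Real.pi * t))⁻¹ *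
          (Real.sqrt (Real.pi / (4 * t)))⁻¹ * (Real.pi / (2 * t))
          = (2 * Real.pi)⁻¹ * ((Real.sqrt (Real.pi * t) * Real.sqrt (Real.pi / (4 * t)))⁻¹) *
            (Real.pi / (2 * t)) := by
        rw [mul_inv]; ring
      rw [reassoc, hss]
      field_simp
    have := congrArg Real.sqrt hsq
    rwa [Real.sqrt_sq hCLnn, Real.sqrt_sq hCRnn] at this
  have hE : e1 + e2 = e3 + e4 := by
    rw [he1, he2, he3, he4]
    field_simp
    ring
  have hRR : Real.sqrt (Real.sqrt (2 * Real.pi * t))⁻¹ * Real.sqrt (Real.sqrt (2 * Real.pi * t))⁻¹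
      = (Real.sqrt (2 * Real.pi * t))⁻¹ := Real.mul_self_sqrt (by positivity)
  calc (Real.sqrt (2 * Real.pi))⁻¹ * (Real.sqrt (Real.sqrt (Real.pi * t))⁻¹ * Real.exp e1) *
        (Real.sqrt (Real.sqrt (Real.pi / (4 * t)))⁻¹ * (Real.sqrt (Real.pi / (2 * t)) * Real.exp e2))
      = CL * Real.exp (e1 + e2) := by rw [Real.exp_add, hCL]; ring
    _ = (Real.sqrt (2 * Real.pi * t))⁻¹ * Real.exp (e3 + e4) := by rw [hC, hE]
    _ = (Real.sqrt (Real.sqrt (2 * Real.pi * t))⁻¹ * Real.sqrt (Real.sqrt (2 * Real.pi * t))⁻¹) *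
        Real.exp (e3 + e4) := by rw [hRR]
    _ = (Real.sqrt (Real.sqrt (2 * Real.pi * t))⁻¹ * Real.exp e3) *
        (Real.sqrt (Real.sqrt (2 * Real.pi * t))⁻¹ * Real.exp e4) := by
        rw [Real.exp_add]; ring

lemma oneDimKey {t : ℝ} (ht : 0 < t) (x y : ℝ) :
    (((2 * Real.pi : ℝ) ^ (-(1 : ℝ) / 2) : ℝ) : ℂ) * sg (t / 2) ((x + y) / 2) *
        ∫ u : ℝ, sg (1 / (8 * t)) u * Complex.exp (Complex.I * (((x - y) * u : ℝ) : ℂ))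
      = sg t x * sg t y := by
  have hpi := Real.pi_pos
  have h8 : (0:ℝ) < 1 / (8 * t) := by positivity
  set B : ℂ := ((2 * t : ℝ) : ℂ) with hB
  set c : ℂ := ((x - y : ℝ) : ℂ) with hc
  have hBne : ((2 * t : ℝ) : ℂ) ≠ 0 := Complex.ofReal_ne_zero.mpr (by positivity)
  have hBre : 0 < B.re := by rw [hB, Complex.ofReal_re]; positivity
  have hint : (fun u : ℝ => sg (1 / (8 * t)) u * Complex.exp (Complex.I * (((x - y) * u : ℝ) : ℂ)))
      = fun u : ℝ => ((Real.sqrt (Real.sqrt (2 * Real.pi * (1 / (8 * t))))⁻¹ : ℝ) : ℂ) *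
          (Complex.exp (Complex.I * c * (u : ℂ)) * Complex.exp (-B * (u : ℂ) ^ 2)) := by
    funext u
    rw [sg, sqrt_gauss h8, Complex.ofReal_mul, Complex.ofReal_exp]
    rw [show ((-(u ^ 2) / (4 * (1 / (8 * t))) : ℝ) : ℂ) = -B * (u : ℂ) ^ 2 by
      rw [hB]; push_cast; field_simp; ring]
    rw [show Complex.I * (((x - y) * u : ℝ) : ℂ) = Complex.I * c * (u : ℂ) by
      rw [hc]; push_cast; ring]
    ring
  rw [hint, integral_const_mul, fourierIntegral_gaussian hBre c]
  have hpow : ((Real.pi : ℂ) / B) ^ (1 / 2 : ℂ)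
      = (((Real.pi / (2 * t)) ^ ((1 : ℝ) / 2) : ℝ) : ℂ) := by
    rw [hB, show ((Real.pi : ℂ)) / ((2 * t : ℝ) : ℂ) = ((Real.pi / (2 * t) : ℝ) : ℂ) by
      push_cast; ring]
    rw [show (1 / 2 : ℂ) = (((1 : ℝ) / 2 : ℝ) : ℂ) by norm_num]
    rw [← Complex.ofReal_cpow (by positivity)]
  have hexp : Complex.exp (-c ^ 2 / (4 * B)) = ((Real.exp (-(x - y) ^ 2 / (8 * t)) : ℝ) : ℂ) := by
    rw [Complex.ofReal_exp]
    congr 1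
    rw [hB, hc]
    push_cast
    ring
  rw [hpow, hexp]
  rw [sg, sg, sg]
  exact_mod_cast key_real ht x y


/-! ### The core identity -/

lemma weylIntegral_extF {t : ℝ} (ht : 0 < t) (h : (Fin n → ℝ) × (Fin n → ℝ) → ℂ)
    (z : (Fin (n + 1) → ℝ) × (Fin (n + 1) → ℝ)) :
    weylIntegral (extF n (t / 2) (1 / (8 * t)) h) z
      = weylIntegral h (proj n z) * sg t (z.1 (Fin.last n)) * sg t (z.2 (Fin.last n)) := by
  unfold weylIntegral
  rw [Fintype.card_fin, Fintype.card_fin]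
  have hMP : MeasurePreserving (⇑(eM n).symm)
      ((volume : Measure ℝ).prod (volume : Measure (Fin n → ℝ)))
      (volume : Measure (Fin (n + 1) → ℝ)) := (he n).symm
  rw [← hMP.integral_comp (eM n).symm.measurableEmbedding]
  have hsplit : ∀ w : ℝ × (Fin n → ℝ),
      extF n (t / 2) (1 / (8 * t)) h
          (fun j => (z.1 j + z.2 j) / 2, (eM n).symm w) *
        Complex.exp (Complex.I * ((∑ j, (z.1 j - z.2 j) * (eM n).symm w j : ℝ) : ℂ))
      = sg (t / 2) ((z.1 (Fin.last n) + z.2 (Fin.last n)) / 2) *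
        ((fun u : ℝ => sg (1 / (8 * t)) u * Complex.exp (Complex.I *
            (((z.1 (Fin.last n) - z.2 (Fin.last n)) * u : ℝ) : ℂ))) w.1 *
          (fun ξ' : Fin n → ℝ => h (fun j => ((proj n z).1 j + (proj n z).2 j) / 2, ξ') *
            Complex.exp (Complex.I *
              ((∑ j, ((proj n z).1 j - (proj n z).2 j) * ξ' j : ℝ) : ℂ))) w.2) := by
    intro w
    have hx1 : ((eM n).symm w) (Fin.last n) = w.1 := eM_symm_last n w
    have hsum : (∑ j, (z.1 j - z.2 j) * (eM n).symm w j : ℝ)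
        = (∑ j, ((proj n z).1 j - (proj n z).2 j) * w.2 j : ℝ) +
          (z.1 (Fin.last n) - z.2 (Fin.last n)) * w.1 := by
      rw [Fin.sum_univ_castSucc]
      congr 1
      · refine Finset.sum_congr rfl fun j _ => ?_
        rw [eM_symm_castSucc n w j]
        rfl
      · rw [hx1]
    have harg : proj n (fun j => (z.1 j + z.2 j) / 2, (eM n).symm w)
        = (fun j => ((proj n z).1 j + ((proj n z).2 j)) / 2, w.2) := by
      refine Prod.ext ?_ ?_
      · funext j; rfl
      · funext j; exact eM_symm_castSucc n w j
    simp only [extF]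
    rw [harg, hsum, hx1]
    rw [show Complex.I * ((((∑ j, ((proj n z).1 j - (proj n z).2 j) * w.2 j : ℝ)) +
        (z.1 (Fin.last n) - z.2 (Fin.last n)) * w.1 : ℝ) : ℂ)
      = Complex.I * ((∑ j, ((proj n z).1 j - (proj n z).2 j) * w.2 j : ℝ) : ℂ)
        + Complex.I * (((z.1 (Fin.last n) - z.2 (Fin.last n)) * w.1 : ℝ) : ℂ) by
        push_cast; ring]
    rw [Complex.exp_add]
    ring
  simp only [hsplit]
  rw [integral_const_mul, integral_prod_mul
    (f := fun u : ℝ => sg (1 / (8 * t)) u * Complex.exp (Complex.I *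
      (((z.1 (Fin.last n) - z.2 (Fin.last n)) * u : ℝ) : ℂ)))
    (g := fun ξ' : Fin n → ℝ => h (fun j => ((proj n z).1 j + (proj n z).2 j) / 2, ξ') *
      Complex.exp (Complex.I *
        ((∑ j, ((proj n z).1 j - (proj n z).2 j) * ξ' j : ℝ) : ℂ)))]
  have hkey := oneDimKey ht (z.1 (Fin.last n)) (z.2 (Fin.last n))
  have hCsplit : ((2 * Real.pi) ^ (-((n + 1 : ℕ) : ℝ) / 2) : ℝ)
      = (2 * Real.pi) ^ (-(n : ℝ) / 2) * (2 * Real.pi) ^ (-(1 : ℝ) / 2) := by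
    rw [← Real.rpow_add (by positivity)]
    congr 1
    push_cast
    ring
  rw [hCsplit, Complex.ofReal_mul]
  linear_combination (((2 * Real.pi) ^ (-(n : ℝ) / 2) : ℝ) : ℂ) *
    (∫ ξ' : Fin n → ℝ, h (fun j => ((proj n z).1 j + (proj n z).2 j) / 2, ξ') *
      Complex.exp (Complex.I *
        ((∑ j, ((proj n z).1 j - (proj n z).2 j) * ξ' j : ℝ) : ℂ))) * hkey

end WeylAux

open WeylAux

/-- The middle square of the inductive diagram commutes: with `m = n+1 ≥ 2`, `t = t_m > 0`,
`α(a)(x,ξ) = a(x',ξ') γ_{t/2}(x_m)^{1/2} γ_{1/(8t)}(ξ_m)^{1/2}` and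
`η(K)(x,y) = K(x',y') γ_t(x_m)^{1/2} γ_t(y_m)^{1/2}`, one has
`η(T_{m−1}(a)) = T_m(α(a))` in `L²(ℝ^m × ℝ^m)`.  Here `b` is (the `L²`-class of) `α(a)`. -/
theorem weyl_middle_square (n : ℕ) (hn : 1 ≤ n) (t : ℝ) (ht : 0 < t)
    (Un : Lp ℂ 2 (volume : Measure ((Fin n → ℝ) × (Fin n → ℝ))) ≃ₗᵢ[ℂ]
          Lp ℂ 2 (volume : Measure ((Fin n → ℝ) × (Fin n → ℝ))))
    (hUn : IsWeylTransform Un)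
    (Um : Lp ℂ 2 (volume : Measure ((Fin (n + 1) → ℝ) × (Fin (n + 1) → ℝ))) ≃ₗᵢ[ℂ]
          Lp ℂ 2 (volume : Measure ((Fin (n + 1) → ℝ) × (Fin (n + 1) → ℝ))))
    (hUm : IsWeylTransform Um)
    (a : Lp ℂ 2 (volume : Measure ((Fin n → ℝ) × (Fin n → ℝ))))
    (b : Lp ℂ 2 (volume : Measure ((Fin (n + 1) → ℝ) × (Fin (n + 1) → ℝ))))
    (hb : ∀ᵐ z ∂(volume : Measure ((Fin (n + 1) → ℝ) × (Fin (n + 1) → ℝ))),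
      b z = a (z.1 ∘ Fin.castSucc, z.2 ∘ Fin.castSucc) *
        (Real.sqrt (gauss (t / 2) (z.1 (Fin.last n))) : ℂ) *
        (Real.sqrt (gauss (1 / (8 * t)) (z.2 (Fin.last n))) : ℂ)) :
    ∀ᵐ z ∂(volume : Measure ((Fin (n + 1) → ℝ) × (Fin (n + 1) → ℝ))),
      (Um b) z = (Un a) (z.1 ∘ Fin.castSucc, z.2 ∘ Fin.castSucc) *
        (Real.sqrt (gauss t (z.1 (Fin.last n))) : ℂ) *
        (Real.sqrt (gauss t (z.2 (Fin.last n))) : ℂ) := by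
  classical
  have ht2 : (0:ℝ) < t / 2 := by positivity
  have ht8 : (0:ℝ) < 1 / (8 * t) := by positivity
  set R : (Fin (n + 1) → ℝ) × (Fin (n + 1) → ℝ) → ℂ := extF n t t (⇑(Un a)) with hRdef
  have hRm : AEStronglyMeasurable R volume :=
    aestronglyMeasurable_extF (Lp.aestronglyMeasurable (Un a))
  have hb' : ⇑b =ᵐ[volume] extF n (t / 2) (1 / (8 * t)) (⇑a) := hb
  have hnorm : ∀ {ι : Type} [Fintype ι] (f : Lp ℂ 2
      (volume : Measure ((ι → ℝ) × (ι → ℝ)))),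
      eLpNorm (⇑f) 2 volume = ENNReal.ofReal ‖f‖ := by
    intro ι _ f
    rw [Lp.norm_def, ENNReal.ofReal_toReal (Lp.eLpNorm_ne_top f)]
  have key : ∀ ε : ENNReal, ε ≠ 0 →
      eLpNorm (⇑(Um b) - R) 2 volume ≤ ε + ε := by
    intro ε hε
    obtain ⟨g, hg_close, hg2⟩ :=
      (Lp.memLp a).exists_simpleFunc_eLpNorm_sub_lt (by norm_num) hε
    have hgi : Integrable (⇑g) volume :=
      (SimpleFunc.memLp_iff_integrable two_ne_zero (by norm_num)).mp hg2
    set G := extF n (t / 2) (1 / (8 * t)) (⇑g) with hGdef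
    have hG2 : MemLp G 2 volume := memℒp_extF ht2 ht8 hg2
    have hGi : Integrable G volume := integrable_extF ht2 ht8 hgi
    have h1 : ∀ᵐ z ∂volume, (Um (hG2.toLp G)) z = weylIntegral G z := hUm G hG2 hGi
    have h2 : ∀ᵐ w ∂(volume : Measure ((Fin n → ℝ) × (Fin n → ℝ))),
        (Un (hg2.toLp ⇑g)) w = weylIntegral (⇑g) w := hUn (⇑g) hg2 hgi
    have h2' : ∀ᵐ z ∂(volume : Measure ((Fin (n + 1) → ℝ) × (Fin (n + 1) → ℝ))),
        (Un (hg2.toLp ⇑g)) (proj n z) = weylIntegral (⇑g) (proj n z) :=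
      (qmp_proj n).ae h2
    have hUmG : ⇑(Um (hG2.toLp G)) =ᵐ[volume] extF n t t (⇑(Un (hg2.toLp ⇑g))) := by
      filter_upwards [h1, h2'] with z hz1 hz2
      rw [hz1, hGdef, weylIntegral_extF ht]
      show _ = (Un (hg2.toLp ⇑g)) (proj n z) * sg t (z.1 (Fin.last n)) * sg t (z.2 (Fin.last n))
      rw [hz2]
    -- first term
    have e1 : eLpNorm (⇑(Um b) - ⇑(Um (hG2.toLp G))) 2 volume < ε := by
      have hc1 : ⇑(Um b) - ⇑(Um (hG2.toLp G)) =ᵐ[volume] ⇑(Um b - Um (hG2.toLp G)) :=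
        (Lp.coeFn_sub _ _).symm
      rw [eLpNorm_congr_ae hc1, show Um b - Um (hG2.toLp G) = Um (b - hG2.toLp G) from
        (map_sub Um b (hG2.toLp G)).symm, hnorm, LinearIsometryEquiv.norm_map, ← hnorm]
      have hc2 : ⇑(b - hG2.toLp G) =ᵐ[volume] ⇑b - G := by
        filter_upwards [Lp.coeFn_sub b (hG2.toLp G), hG2.coeFn_toLp] with z hz1 hz2
        rw [hz1]
        show b z - (hG2.toLp G) z = b z - G z
        rw [hz2]
      rw [eLpNorm_congr_ae hc2]
      have hc3 : ⇑b - G =ᵐ[volume] extF n (t / 2) (1 / (8 * t)) (⇑a - ⇑g) := by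
        filter_upwards [hb'] with z hz
        show b z - G z = _
        rw [hz, hGdef, ← extF_sub]
        rfl
      rw [eLpNorm_congr_ae hc3, eLpNorm_extF ht2 ht8 ((Lp.aestronglyMeasurable a).sub
        g.aestronglyMeasurable)]
      exact hg_close
    -- second term
    have e2 : eLpNorm (⇑(Um (hG2.toLp G)) - R) 2 volume < ε := by
      have hc1 : ⇑(Um (hG2.toLp G)) - R =ᵐ[volume]
          extF n t t (⇑(Un (hg2.toLp ⇑g)) - ⇑(Un a)) := by
        filter_upwards [hUmG] with z hz
        show (Um (hG2.toLp G)) z - R z = _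
        rw [hz, hRdef, ← extF_sub]
        rfl
      rw [eLpNorm_congr_ae hc1, eLpNorm_extF ht ht
        ((Lp.aestronglyMeasurable _).sub (Lp.aestronglyMeasurable _))]
      have hc2 : ⇑(Un (hg2.toLp ⇑g)) - ⇑(Un a) =ᵐ[volume]
          ⇑(Un (hg2.toLp ⇑g) - Un a) := (Lp.coeFn_sub _ _).symm
      rw [eLpNorm_congr_ae hc2, show Un (hg2.toLp ⇑g) - Un a = Un (hg2.toLp ⇑g - a) from
        (map_sub Un (hg2.toLp ⇑g) a).symm, hnorm, LinearIsometryEquiv.norm_map, ← hnorm]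
      have hc3 : ⇑(hg2.toLp ⇑g - a) =ᵐ[volume] -(⇑a - ⇑g) := by
        filter_upwards [Lp.coeFn_sub (hg2.toLp ⇑g) a, hg2.coeFn_toLp] with w hz1 hz2
        rw [hz1]
        show (hg2.toLp ⇑g) w - a w = -(a w - g w)
        rw [hz2]
        ring
      rw [eLpNorm_congr_ae hc3, eLpNorm_neg]
      exact hg_close
    have htri : eLpNorm (⇑(Um b) - R) 2 volume ≤
        eLpNorm (⇑(Um b) - ⇑(Um (hG2.toLp G))) 2 volume +
        eLpNorm (⇑(Um (hG2.toLp G)) - R) 2 volume := by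
      have hsum : ⇑(Um b) - R = (⇑(Um b) - ⇑(Um (hG2.toLp G))) +
          (⇑(Um (hG2.toLp G)) - R) := by
        funext w
        simp
      rw [hsum]
      exact eLpNorm_add_le
        ((Lp.aestronglyMeasurable _).sub (Lp.aestronglyMeasurable _))
        ((Lp.aestronglyMeasurable _).sub hRm) one_le_two
    exact htri.trans (add_le_add e1.le e2.le)
  have hE0 : eLpNorm (⇑(Um b) - R) 2 volume = 0 := by
    set E := eLpNorm (⇑(Um b) - R) 2 volume with hEdef
    by_contra hne
    have hfin : E ≤ 2 := by
      have h := key 1 one_ne_zero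
      calc E ≤ 1 + 1 := h
        _ = 2 := one_add_one_eq_two
    have hnetop : E ≠ ⊤ := (hfin.trans_lt (by norm_num)).ne
    have hε : E / 2 / 2 ≠ 0 := by
      simp only [ne_eq, ENNReal.div_eq_zero_iff]
      push_neg
      refine ⟨⟨hne, ?_⟩, ?_⟩ <;> norm_num
    have hle := key (E / 2 / 2) hε
    rw [ENNReal.add_halves] at hle
    exact absurd hle (not_le.mpr (ENNReal.half_lt_self hne hnetop))
  have hae : ⇑(Um b) - R =ᵐ[volume] 0 :=
    (eLpNorm_eq_zero_iff ((Lp.aestronglyMeasurable _).sub hRm) two_ne_zero).mp hE0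
  filter_upwards [hae] with z hz
  have hz' : (Um b) z - R z = 0 := hz
  have : (Um b) z = R z := sub_eq_zero.mp hz'
  exact this

end
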